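/- arXiv:2403.15933 — 2 statements merged into one kernel-verified Lean document; each statement's English description precedes it below -/
import Mathlib

section
/- For any interpretation ω over domain [n+m], the weight satisfies w(ω↓[n]) · w(ω↓[n+1..n+m]) · ∏_{k∈[d]} (w_k^min)^{C(n+m,k)−C(n,k)−C(m,k)} ≤ w(ω) ≤ w(ω↓[n]) · w(ω↓[n+1..n+m]) · ∏_{k∈[d]} (w_k^max)^{C(n+m,k)−C(n,k)−C(m,k)}, where C(·,·) denotes binomial coefficients. -/
open scoped BigOperators

structure Vocab where
  Rel : Type
  [fintypeRel : Fintype Rel]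
  [decEqRel : DecidableEq Rel]
  ar : Rel → ℕ

attribute [instance] Vocab.fintypeRel Vocab.decEqRel

def Interp (V : Vocab) (D : Type) : Type :=
  (r : V.Rel) → (Fin (V.ar r) → D) → Bool

noncomputable instance (V : Vocab) (D : Type) [Fintype D] [DecidableEq D] :
    Fintype (Interp V D) := by
  unfold Interp; infer_instance

noncomputable instance (V : Vocab) (D : Type) : DecidableEq (Interp V D) :=
  Classical.decEq _

def restrict {V : Vocab} {D E : Type} (f : E → D) (ω : Interp V D) : Interp V E :=
  fun r t => ω r (f ∘ t)

structure Formula (V : Vocab) where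
  arity : ℕ
  sat : Interp V (Fin arity) → Bool

structure MLN (V : Vocab) where
  formulas : List (Formula V × ℝ)

noncomputable def nGround {V : Vocab} {D : Type} [Fintype D] [DecidableEq D]
    (φ : Formula V) (ω : Interp V D) : ℕ :=
  Fintype.card {c : Fin φ.arity ↪ D // φ.sat (restrict (fun i => c i) ω) = true}

noncomputable def weight {V : Vocab} {D : Type} [Fintype D] [DecidableEq D]
    (Φ : MLN V) (ω : Interp V D) : ℝ :=
  Real.exp ((Φ.formulas.map (fun p => p.2 * (nGround p.1 ω : ℝ))).sum)

noncomputable def kweight {V : Vocab} (Φ : MLN V) (k : ℕ) (ν : Interp V (Fin k)) : ℝ :=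
  Real.exp (((Φ.formulas.filter (fun p => p.1.arity == k)).map
      (fun p => p.2 * (nGround p.1 ν : ℝ))).sum)

noncomputable def downset {V : Vocab} {n k : ℕ} (ω : Interp V (Fin n))
    (s : Finset (Fin n)) (h : s.card = k) : Interp V (Fin k) :=
  restrict (fun i => ((s.orderIsoOfFin h i : Fin n))) ω

noncomputable def Zpart {V : Vocab} (Φ : MLN V) (N : ℕ) : ℝ :=
  ∑ ω : Interp V (Fin N), weight Φ ω

noncomputable def wmax {V : Vocab} (Φ : MLN V) (k : ℕ) : ℝ :=
  ⨆ ν : Interp V (Fin k), kweight Φ k ν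

noncomputable def wmin {V : Vocab} (Φ : MLN V) (k : ℕ) : ℝ :=
  ⨅ ν : Interp V (Fin k), kweight Φ k ν

def exponent (n m k : ℕ) : ℕ := (n + m).choose k - n.choose k - m.choose k

noncomputable def Mmax {V : Vocab} (Φ : MLN V) (d n m : ℕ) : ℝ :=
  ∏ k ∈ Finset.Icc 1 d, (wmax Φ k) ^ (exponent n m k)

noncomputable def Mmin {V : Vocab} (Φ : MLN V) (d n m : ℕ) : ℝ :=
  ∏ k ∈ Finset.Icc 1 d, (wmin Φ k) ^ (exponent n m k)

noncomputable def Pdist {V : Vocab} (Φ : MLN V) (N : ℕ) (ω : Interp V (Fin N)) : ℝ :=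
  weight Φ ω / Zpart Φ N

noncomputable def marg {V : Vocab} (Φ : MLN V) (n m : ℕ) (ω : Interp V (Fin n)) : ℝ :=
  ∑ ω' ∈ Finset.univ.filter
      (fun ω' : Interp V (Fin (n + m)) => restrict (Fin.castAdd m) ω' = ω),
    Pdist Φ (n + m) ω'

section AuxSandwich

variable {V : Vocab}

noncomputable def gsum (φ : Formula V) {N : ℕ} (ω : Interp V (Fin N))
    (s : Finset (Fin N)) : ℕ :=
  if h : s.card = φ.arity then nGround φ (downset ω s h) else 0

lemma restrict_congr {D : Type} {k : ℕ} (ω : Interp V D) {g g' : Fin k → D}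
    (h : ∀ x, g x = g' x) : restrict g ω = restrict g' ω := by
  have hg : g = g' := funext h
  rw [hg]

/-- forward map: compress an embedding with range inside `t` to an embedding into `Fin k`. -/
noncomputable def embTo {j : ℕ} (t : Finset (Fin j)) {k : ℕ} (htcard : t.card = k)
    (c : Fin k ↪ Fin j) (hc : ∀ x, c x ∈ t) : Fin k ↪ Fin k :=
  ⟨fun x => (t.orderIsoOfFin htcard).symm ⟨c x, hc x⟩, by
    intro x y hxy
    apply c.injective
    have h2 := (t.orderIsoOfFin htcard).symm.injective hxy
    exact congrArg Subtype.val h2⟩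

lemma embTo_spec {j : ℕ} (t : Finset (Fin j)) {k : ℕ} (htcard : t.card = k)
    (c : Fin k ↪ Fin j) (hc : ∀ x, c x ∈ t) (x : Fin k) :
    t.orderEmbOfFin htcard (embTo t htcard c hc x) = c x := by
  show ((t.orderIsoOfFin htcard) ((t.orderIsoOfFin htcard).symm ⟨c x, hc x⟩) : Fin j) = c x
  rw [OrderIso.apply_symm_apply]

lemma embTo_trans {j : ℕ} (t : Finset (Fin j)) {k : ℕ} (htcard : t.card = k)
    (e : Fin k ↪ Fin k) (hc : ∀ x, (e.trans (t.orderEmbOfFin htcard).toEmbedding) x ∈ t) :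
    embTo t htcard (e.trans (t.orderEmbOfFin htcard).toEmbedding) hc = e := by
  apply Function.Embedding.ext
  intro x
  show (t.orderIsoOfFin htcard).symm ⟨(t.orderEmbOfFin htcard) (e x), hc x⟩ = e x
  rw [OrderIso.symm_apply_eq]
  exact Subtype.ext rfl

lemma fiber_card (φ : Formula V) {j N : ℕ} (f : Fin j ↪o Fin N) (ω : Interp V (Fin N))
    (s : Finset (Fin N)) (hsub : s ⊆ Finset.univ.map f.toEmbedding)
    (hcard : s.card = φ.arity) :
    Fintype.card {c : Fin φ.arity ↪ Fin j //
        φ.sat (restrict (fun i => c i) (restrict (⇑f) ω)) = true ∧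
        Finset.univ.map (c.trans f.toEmbedding) = s} =
      nGround φ (downset ω s hcard) := by
  classical
  set t : Finset (Fin j) := s.preimage (⇑f) f.injective.injOn with ht
  have hmemt : ∀ x : Fin j, x ∈ t ↔ f x ∈ s := fun x => Finset.mem_preimage
  have htmap : t.map f.toEmbedding = s := by
    ext x
    constructor
    · intro hx
      rcases Finset.mem_map.1 hx with ⟨a, ha, rfl⟩
      exact (hmemt a).1 ha
    · intro hx
      rcases Finset.mem_map.1 (hsub hx) with ⟨a, -, rfl⟩
      exact Finset.mem_map.2 ⟨a, (hmemt a).2 hx, rfl⟩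
  have htcard : t.card = φ.arity := by rw [← hcard, ← htmap, Finset.card_map]
  have hkey : ∀ i, f (t.orderEmbOfFin htcard i) = s.orderEmbOfFin hcard i := by
    have hmem : ∀ i, (fun i => f (t.orderEmbOfFin htcard i)) i ∈ s := fun i =>
      (hmemt _).1 (Finset.orderEmbOfFin_mem t htcard i)
    have hmono : StrictMono (fun i => f (t.orderEmbOfFin htcard i)) :=
      f.strictMono.comp (t.orderEmbOfFin htcard).strictMono
    exact congrFun (Finset.orderEmbOfFin_unique hcard hmem hmono)
  have hct : ∀ (c : Fin φ.arity ↪ Fin j),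
      Finset.univ.map (c.trans f.toEmbedding) = s → ∀ x, c x ∈ t := fun c hc x =>
    (hmemt _).2 (hc ▸ Finset.mem_map.2 ⟨x, Finset.mem_univ _, rfl⟩)
  unfold nGround
  apply Fintype.card_congr
  refine
    { toFun := fun cp => ⟨embTo t htcard cp.1 (hct cp.1 cp.2.2), ?_⟩
      invFun := fun ep => ⟨ep.1.trans (t.orderEmbOfFin htcard).toEmbedding, ?_, ?_⟩
      left_inv := ?_
      right_inv := ?_ }
  · -- sat for forward image
    obtain ⟨c, hsat, himg⟩ := cp
    have heq : restrict (fun i => (embTo t htcard c (hct c himg)) i) (downset ω s hcard)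
        = restrict (fun i => c i) (restrict (⇑f) ω) := by
      show restrict (fun x => ((s.orderIsoOfFin hcard) ((embTo t htcard c (hct c himg)) x) : Fin N)) ω
          = restrict (fun x => f (c x)) ω
      apply restrict_congr
      intro x
      rw [Finset.coe_orderIsoOfFin_apply, ← hkey, embTo_spec]
    rw [heq]
    exact hsat
  · -- sat for backward image
    obtain ⟨e, hsat⟩ := ep
    have heq : restrict (fun i => (e.trans (t.orderEmbOfFin htcard).toEmbedding) i)
          (restrict (⇑f) ω)
        = restrict (fun i => e i) (downset ω s hcard) := by
      show restrict (fun x => f (t.orderEmbOfFin htcard (e x))) ω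
          = restrict (fun x => ((s.orderIsoOfFin hcard) (e x) : Fin N)) ω
      apply restrict_congr
      intro x
      rw [Finset.coe_orderIsoOfFin_apply, hkey]
    rw [heq]
    exact hsat
  · -- image condition for backward map
    obtain ⟨e, -⟩ := ep
    ext y
    constructor
    · intro hy
      rcases Finset.mem_map.1 hy with ⟨x, -, rfl⟩
      show f (t.orderEmbOfFin htcard (e x)) ∈ s
      rw [hkey]
      exact Finset.orderEmbOfFin_mem s hcard (e x)
    · intro hy
      have hy' : y ∈ Set.range (s.orderEmbOfFin hcard) := by
        rw [Finset.range_orderEmbOfFin]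
        exact hy
      obtain ⟨i, hi⟩ := hy'
      obtain ⟨x, hx⟩ := Finite.injective_iff_surjective.1 e.injective i
      refine Finset.mem_map.2 ⟨x, Finset.mem_univ _, ?_⟩
      show f (t.orderEmbOfFin htcard (e x)) = y
      rw [hkey, hx, hi]
  · -- left inverse
    rintro ⟨c, hsat, himg⟩
    apply Subtype.ext
    apply Function.Embedding.ext
    intro x
    exact embTo_spec t htcard c (hct c himg) x
  · -- right inverse
    rintro ⟨e, hsat⟩
    apply Subtype.ext
    exact embTo_trans t htcard e _

lemma nGround_restrict_sum (φ : Formula V) {j N : ℕ} (f : Fin j ↪o Fin N)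
    (ω : Interp V (Fin N)) :
    nGround φ (restrict (⇑f) ω) =
      ∑ s ∈ Finset.powersetCard φ.arity (Finset.univ.map f.toEmbedding), gsum φ ω s := by
  classical
  unfold nGround
  rw [Fintype.card_subtype]
  rw [Finset.card_eq_sum_card_fiberwise
    (f := fun c : Fin φ.arity ↪ Fin j => Finset.univ.map (c.trans f.toEmbedding))
    (t := Finset.powersetCard φ.arity (Finset.univ.map f.toEmbedding))
    (fun c _ => by
      simp only [Finset.mem_coe]
      rw [Finset.mem_powersetCard]
      constructor
      · intro x hx
        rcases Finset.mem_map.1 hx with ⟨i, -, rfl⟩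
        exact Finset.mem_map.2 ⟨c i, Finset.mem_univ _, rfl⟩
      · simp)]
  refine Finset.sum_congr rfl fun s hs => ?_
  rw [Finset.mem_powersetCard] at hs
  obtain ⟨hsub, hcard⟩ := hs
  simp only [gsum]
  rw [dif_pos hcard, ← fiber_card φ f ω s hsub hcard, Fintype.card_subtype]
  congr 1
  rw [Finset.filter_filter]

end AuxSandwich

section AuxSandwich2

variable {V : Vocab}

lemma nGround_sum (φ : Formula V) {N : ℕ} (ω : Interp V (Fin N)) :
    nGround φ ω = ∑ s ∈ Finset.powersetCard φ.arity Finset.univ, gsum φ ω s := by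
  have h := nGround_restrict_sum φ (OrderEmbedding.ofStrictMono (id : Fin N → Fin N)
    strictMono_id) ω
  have h2 : Finset.univ.map (OrderEmbedding.ofStrictMono (id : Fin N → Fin N)
      strictMono_id).toEmbedding = Finset.univ :=
    Finset.eq_univ_of_forall fun x => Finset.mem_map.2 ⟨x, Finset.mem_univ x, rfl⟩
  rw [h2] at h
  exact h

noncomputable def kw (Φ : MLN V) (k : ℕ) {N : ℕ} (ω : Interp V (Fin N))
    (s : Finset (Fin N)) : ℝ :=
  if h : s.card = k then kweight Φ k (downset ω s h) else 1

lemma gsum_eq_of_card (φ : Formula V) {N : ℕ} (ω : Interp V (Fin N)) {s : Finset (Fin N)}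
    {k : ℕ} (hk : s.card = k) (ha : φ.arity = k) :
    gsum φ ω s = nGround φ (downset ω s hk) := by
  subst ha
  simp only [gsum]
  rw [dif_pos hk]

lemma list_sum_map_add {α : Type*} (L : List α) (f g : α → ℝ) :
    (L.map fun x => f x + g x).sum = (L.map f).sum + (L.map g).sum := by
  induction L with
  | nil => simp
  | cons a L ih => simp [ih]; ring

lemma list_sum_finset_sum {α β : Type*} (L : List α) (S : Finset β) (v : α → β → ℝ) :
    (L.map fun p => ∑ s ∈ S, v p s).sum = ∑ s ∈ S, (L.map fun p => v p s).sum := by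
  induction L with
  | nil => simp
  | cons a L ih => simp [ih, Finset.sum_add_distrib]

lemma list_fiber_sum {α : Type*} (L : List α) (key : α → ℕ) (u : α → ℝ) (S : Finset ℕ)
    (h : ∀ p ∈ L, key p ∈ S) :
    (L.map u).sum = ∑ k ∈ S, ((L.filter fun p => key p == k).map u).sum := by
  induction L with
  | nil => simp
  | cons a L ih =>
    have ha : key a ∈ S := h a List.mem_cons_self
    have hrest := ih fun p hp => h p (List.mem_cons_of_mem _ hp)
    simp only [List.map_cons, List.sum_cons, List.filter_cons]
    rw [hrest]
    have hterm : ∀ k ∈ S, ((if key a == k then a :: List.filter (fun p => key p == k) L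
        else List.filter (fun p => key p == k) L).map u).sum
        = ((L.filter fun p => key p == k).map u).sum + if k = key a then u a else 0 := by
      intro k _
      by_cases hk : key a = k
      · subst hk; simp [add_comm]
      · simp [hk, Ne.symm hk]
    rw [Finset.sum_congr rfl hterm, Finset.sum_add_distrib,
      Finset.sum_ite_eq' S (key a) (fun _ => u a), if_pos ha]
    ring

end AuxSandwich2

section AuxSandwich3

variable {V : Vocab}

def crossA (n m : ℕ) : Finset (Fin (n + m)) :=
  Finset.univ.map (Fin.castAddOrderEmb (n := n) m).toEmbedding

def crossB (n m : ℕ) : Finset (Fin (n + m)) :=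
  Finset.univ.map (Fin.natAddOrderEmb (m := m) n).toEmbedding

def crossC (n m k : ℕ) : Finset (Finset (Fin (n + m))) :=
  Finset.powersetCard k Finset.univ \
    (Finset.powersetCard k (crossA n m) ∪ Finset.powersetCard k (crossB n m))

lemma crossA_card (n m : ℕ) : (crossA n m).card = n := by
  simp [crossA]

lemma crossB_card (n m : ℕ) : (crossB n m).card = m := by
  simp [crossB]

lemma crossAB_disj (n m : ℕ) {x : Fin (n + m)} (hA : x ∈ crossA n m)
    (hB : x ∈ crossB n m) : False := by
  rcases Finset.mem_map.1 hA with ⟨i, -, hi⟩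
  rcases Finset.mem_map.1 hB with ⟨l, -, hl⟩
  have h1 : x.val = i.val := by rw [← hi]; rfl
  have h2 : x.val = n + l.val := by rw [← hl]; rfl
  have h3 := i.isLt
  omega

lemma cross_union_subset (n m k : ℕ) :
    Finset.powersetCard k (crossA n m) ∪ Finset.powersetCard k (crossB n m) ⊆
      Finset.powersetCard k (Finset.univ : Finset (Fin (n + m))) :=
  Finset.union_subset (Finset.powersetCard_mono (Finset.subset_univ _))
    (Finset.powersetCard_mono (Finset.subset_univ _))

lemma cross_disj (n m k : ℕ) (hk : 1 ≤ k) :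
    Disjoint (Finset.powersetCard k (crossA n m)) (Finset.powersetCard k (crossB n m)) := by
  rw [Finset.disjoint_left]
  intro s hsA hsB
  rw [Finset.mem_powersetCard] at hsA hsB
  obtain ⟨x, hx⟩ := Finset.card_pos.1 (by rw [hsA.2]; omega : 0 < s.card)
  exact crossAB_disj n m (hsA.1 hx) (hsB.1 hx)

lemma crossC_card (n m k : ℕ) (hk : 1 ≤ k) : (crossC n m k).card = exponent n m k := by
  unfold crossC
  rw [Finset.card_sdiff_of_subset (cross_union_subset n m k),
    Finset.card_union_of_disjoint (cross_disj n m k hk),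
    Finset.card_powersetCard, Finset.card_powersetCard, Finset.card_powersetCard,
    crossA_card, crossB_card, Finset.card_univ, Fintype.card_fin]
  simp only [exponent, Nat.sub_sub]

lemma nGround_split (φ : Formula V) (hφ : 1 ≤ φ.arity) {n m : ℕ}
    (ω : Interp V (Fin (n + m))) :
    nGround φ ω = nGround φ (restrict (Fin.castAdd m) ω)
      + nGround φ (restrict (Fin.natAdd n) ω)
      + ∑ s ∈ crossC n m φ.arity, gsum φ ω s := by
  have hA : nGround φ (restrict (Fin.castAdd m) ω)
      = ∑ s ∈ Finset.powersetCard φ.arity (crossA n m), gsum φ ω s :=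
    nGround_restrict_sum φ (Fin.castAddOrderEmb m) ω
  have hB : nGround φ (restrict (Fin.natAdd n) ω)
      = ∑ s ∈ Finset.powersetCard φ.arity (crossB n m), gsum φ ω s :=
    nGround_restrict_sum φ (Fin.natAddOrderEmb n) ω
  have e1 := Finset.sum_sdiff (f := gsum φ ω) (cross_union_subset n m φ.arity)
  rw [nGround_sum φ ω, hA, hB, ← e1, Finset.sum_union (cross_disj n m φ.arity hφ)]
  simp only [crossC]
  ring

lemma kw_eq (Φ : MLN V) {N k : ℕ} (ω : Interp V (Fin N)) (s : Finset (Fin N))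
    (h : s.card = k) :
    kw Φ k ω s = Real.exp (((Φ.formulas.filter fun p => p.1.arity == k).map
      fun p => p.2 * (gsum p.1 ω s : ℝ)).sum) := by
  simp only [kw]
  rw [dif_pos h]
  simp only [kweight]
  congr 1
  apply congrArg List.sum
  apply List.map_congr_left
  intro p hp
  have ha : p.1.arity = k := by simpa using (List.mem_filter.1 hp).2
  rw [gsum_eq_of_card p.1 ω h ha]

end AuxSandwich3

/-- sandwich bounds on the weight of an interpretation over [n+m]
in terms of the two marginal weights and the extremal k-weights. -/
theorem weight_sandwich {V : Vocab} (Φ : MLN V) (d n m : ℕ)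
    (hd : ∀ p ∈ Φ.formulas, 1 ≤ p.1.arity ∧ p.1.arity ≤ d)
    (ω : Interp V (Fin (n + m))) :
    weight Φ (restrict (Fin.castAdd m) ω) * weight Φ (restrict (Fin.natAdd n) ω) *
        ∏ k ∈ Finset.Icc 1 d, (wmin Φ k) ^ (exponent n m k)
      ≤ weight Φ ω ∧
    weight Φ ω ≤
      weight Φ (restrict (Fin.castAdd m) ω) * weight Φ (restrict (Fin.natAdd n) ω) *
        ∏ k ∈ Finset.Icc 1 d, (wmax Φ k) ^ (exponent n m k) := by
  classical
  have wApos : (0:ℝ) < weight Φ (restrict (Fin.castAdd m) ω) := Real.exp_pos _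
  have wBpos : (0:ℝ) < weight Φ (restrict (Fin.natAdd n) ω) := Real.exp_pos _
  have hwmin_le : ∀ (k : ℕ) (ν : Interp V (Fin k)), wmin Φ k ≤ kweight Φ k ν := fun k ν =>
    ciInf_le (Set.Finite.bddBelow (Set.finite_range _)) ν
  have hle_wmax : ∀ (k : ℕ) (ν : Interp V (Fin k)), kweight Φ k ν ≤ wmax Φ k := fun k ν =>
    le_ciSup (Set.Finite.bddAbove (Set.finite_range _)) ν
  have hwmin_pos : ∀ k : ℕ, 0 < wmin Φ k := by
    intro k
    haveI : Nonempty (Interp V (Fin k)) := ⟨fun _ _ => true⟩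
    obtain ⟨ν0, hν0⟩ := Finite.exists_min (fun ν : Interp V (Fin k) => kweight Φ k ν)
    have h0 : (0:ℝ) < kweight Φ k ν0 := Real.exp_pos _
    exact lt_of_lt_of_le h0 (le_ciInf hν0)
  -- factorization of the weight
  have hfact : weight Φ ω = weight Φ (restrict (Fin.castAdd m) ω) *
      weight Φ (restrict (Fin.natAdd n) ω) *
      ∏ k ∈ Finset.Icc 1 d, ∏ s ∈ crossC n m k, kw Φ k ω s := by
    have hprod : (∏ k ∈ Finset.Icc 1 d, ∏ s ∈ crossC n m k, kw Φ k ω s) =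
        Real.exp (∑ k ∈ Finset.Icc 1 d, ∑ s ∈ crossC n m k,
          ((Φ.formulas.filter fun p => p.1.arity == k).map
            fun p => p.2 * (gsum p.1 ω s : ℝ)).sum) := by
      rw [Real.exp_sum]
      refine Finset.prod_congr rfl fun k _ => ?_
      rw [Real.exp_sum]
      refine Finset.prod_congr rfl fun s hs => ?_
      have hc : s.card = k := (Finset.mem_powersetCard.1 (Finset.sdiff_subset hs)).2
      exact kw_eq Φ ω s hc
    simp only [weight]
    rw [hprod, ← Real.exp_add, ← Real.exp_add]
    congr 1
    have hstep1 : (Φ.formulas.map fun p => p.2 * (nGround p.1 ω : ℝ)).sum =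
        (Φ.formulas.map fun p =>
          (p.2 * (nGround p.1 (restrict (Fin.castAdd m) ω) : ℝ)
            + p.2 * (nGround p.1 (restrict (Fin.natAdd n) ω) : ℝ))
          + p.2 * ∑ s ∈ crossC n m p.1.arity, (gsum p.1 ω s : ℝ)).sum := by
      apply congrArg List.sum
      apply List.map_congr_left
      intro p hp
      have hsplit := nGround_split p.1 (hd p hp).1 ω
      have hcast : (nGround p.1 ω : ℝ) =
          (nGround p.1 (restrict (Fin.castAdd m) ω) : ℝ)
          + (nGround p.1 (restrict (Fin.natAdd n) ω) : ℝ)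
          + ∑ s ∈ crossC n m p.1.arity, (gsum p.1 ω s : ℝ) := by
        rw [hsplit]
        push_cast
        ring
      rw [hcast]
      ring
    rw [hstep1,
      list_sum_map_add Φ.formulas
        (fun p => p.2 * (nGround p.1 (restrict (Fin.castAdd m) ω) : ℝ)
          + p.2 * (nGround p.1 (restrict (Fin.natAdd n) ω) : ℝ))
        (fun p => p.2 * ∑ s ∈ crossC n m p.1.arity, (gsum p.1 ω s : ℝ)),
      list_sum_map_add Φ.formulas
        (fun p => p.2 * (nGround p.1 (restrict (Fin.castAdd m) ω) : ℝ))
        (fun p => p.2 * (nGround p.1 (restrict (Fin.natAdd n) ω) : ℝ))]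
    congr 1
    rw [list_fiber_sum Φ.formulas (fun p => p.1.arity)
      (fun p => p.2 * ∑ s ∈ crossC n m p.1.arity, (gsum p.1 ω s : ℝ))
      (Finset.Icc 1 d) (fun p hp => Finset.mem_Icc.2 (hd p hp))]
    refine Finset.sum_congr rfl fun k hk => ?_
    rw [← list_sum_finset_sum]
    apply congrArg List.sum
    apply List.map_congr_left
    intro p hp
    have ha : p.1.arity = k := by simpa using (List.mem_filter.1 hp).2
    rw [ha, Finset.mul_sum]
  have hkwb : ∀ k, ∀ s ∈ crossC n m k,
      wmin Φ k ≤ kw Φ k ω s ∧ kw Φ k ω s ≤ wmax Φ k := by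
    intro k s hs
    have hc : s.card = k := (Finset.mem_powersetCard.1 (Finset.sdiff_subset hs)).2
    simp only [kw]
    rw [dif_pos hc]
    exact ⟨hwmin_le _ _, hle_wmax _ _⟩
  have hMmin : (∏ k ∈ Finset.Icc 1 d, wmin Φ k ^ exponent n m k) ≤
      ∏ k ∈ Finset.Icc 1 d, ∏ s ∈ crossC n m k, kw Φ k ω s := by
    apply Finset.prod_le_prod
    · intro k _
      exact pow_nonneg (hwmin_pos k).le _
    · intro k hk
      calc wmin Φ k ^ exponent n m k = ∏ _s ∈ crossC n m k, wmin Φ k := by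
            rw [Finset.prod_const, crossC_card n m k (Finset.mem_Icc.1 hk).1]
        _ ≤ _ := Finset.prod_le_prod (fun s _ => (hwmin_pos k).le)
            (fun s hs => (hkwb k s hs).1)
  have hMmax : (∏ k ∈ Finset.Icc 1 d, ∏ s ∈ crossC n m k, kw Φ k ω s) ≤
      ∏ k ∈ Finset.Icc 1 d, wmax Φ k ^ exponent n m k := by
    apply Finset.prod_le_prod
    · intro k _
      exact Finset.prod_nonneg fun s hs => le_trans (hwmin_pos k).le (hkwb k s hs).1
    · intro k hk
      calc (∏ s ∈ crossC n m k, kw Φ k ω s) ≤ ∏ _s ∈ crossC n m k, wmax Φ k :=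
            Finset.prod_le_prod (fun s hs => le_trans (hwmin_pos k).le (hkwb k s hs).1)
              (fun s hs => (hkwb k s hs).2)
        _ = wmax Φ k ^ exponent n m k := by
            rw [Finset.prod_const, crossC_card n m k (Finset.mem_Icc.1 hk).1]
  constructor
  · rw [hfact]
    exact mul_le_mul_of_nonneg_left hMmin (mul_nonneg wApos.le wBpos.le)
  · rw [hfact]
    exact mul_le_mul_of_nonneg_left hMmax (mul_nonneg wApos.le wBpos.le)
end

section
/- Exact log-likelihood decomposition: for any ω ∈ Ω^(n), −log P_Φ^(n+m)↓[n](ω) = −log P_Φ^(n)(ω) + log(Z(n+m)/(Z(n)·Z(m)·C_{n,m})) − log( (1/(C_{n,m} Z(m))) ∑_{ω': ω'↓[n]=ω} w(ω')/w(ω) ), and the middle term lies in [log M_min, log M_max] while the last log's argument lies in [M_min, M_max]. -/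
open scoped BigOperators

section Aux
variable {V : Vocab}

instance (D : Type) : Nonempty (Interp V D) := ⟨fun _ _ => true⟩

lemma weight_pos {D : Type} [Fintype D] [DecidableEq D] (Φ : MLN V) (ω : Interp V D) :
    0 < weight Φ ω := Real.exp_pos _

lemma kweight_pos (Φ : MLN V) (k : ℕ) (ν : Interp V (Fin k)) : 0 < kweight Φ k ν :=
  Real.exp_pos _

lemma Zpart_pos (Φ : MLN V) (N : ℕ) : 0 < Zpart Φ N :=
  Finset.sum_pos (fun ω _ => weight_pos Φ ω) ⟨fun _ _ => true, Finset.mem_univ _⟩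

lemma wmin_le_kweight (Φ : MLN V) (k : ℕ) (ν : Interp V (Fin k)) :
    wmin Φ k ≤ kweight Φ k ν :=
  ciInf_le (Finite.bddBelow_range _) ν

lemma kweight_le_wmax (Φ : MLN V) (k : ℕ) (ν : Interp V (Fin k)) :
    kweight Φ k ν ≤ wmax Φ k :=
  le_ciSup (Finite.bddAbove_range _) ν

lemma wmin_pos (Φ : MLN V) (k : ℕ) : 0 < wmin Φ k := by
  obtain ⟨ν₀, hν₀⟩ := Finite.exists_min (kweight Φ k)
  exact lt_of_lt_of_le (kweight_pos Φ k ν₀) (le_ciInf hν₀)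

lemma wmax_pos (Φ : MLN V) (k : ℕ) : 0 < wmax Φ k :=
  lt_of_lt_of_le (kweight_pos Φ k (Classical.arbitrary _)) (kweight_le_wmax Φ k _)

lemma Mmin_pos (Φ : MLN V) (d n m : ℕ) : 0 < Mmin Φ d n m :=
  Finset.prod_pos fun k _ => pow_pos (wmin_pos Φ k) _

lemma Mmax_pos (Φ : MLN V) (d n m : ℕ) : 0 < Mmax Φ d n m :=
  Finset.prod_pos fun k _ => pow_pos (wmax_pos Φ k) _

lemma restrict_restrict {D E F : Type} (f : E → D) (g : F → E) (ω : Interp V D) :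
    restrict g (restrict f ω) = restrict (f ∘ g) ω := rfl

end Aux
section Aux2
variable {V : Vocab}

lemma fiber_card_s16 (φ : Formula V) {N : ℕ} (ω : Interp V (Fin N)) (T : Finset (Fin N))
    (hT : T.card = φ.arity) :
    ((Finset.univ.filter (fun c : Fin φ.arity ↪ Fin N =>
        φ.sat (restrict (fun i => c i) ω) = true)).filter
      (fun c => Finset.map c Finset.univ = T)).card
      = nGround φ (downset ω T hT) := by
  classical
  rw [nGround, Fintype.card_subtype]
  set OE := T.orderIsoOfFin hT with hOE
  set fwd : (Fin φ.arity ↪ Fin N) → (Fin φ.arity ↪ Fin φ.arity) := fun c =>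
    if h : ∀ j, c j ∈ T then
      ⟨fun j => OE.symm ⟨c j, h j⟩, fun a b hab =>
        c.injective (congrArg Subtype.val (OE.symm.injective hab))⟩
    else ⟨id, fun a b h => h⟩ with hfwd
  set bwd : (Fin φ.arity ↪ Fin φ.arity) → (Fin φ.arity ↪ Fin N) := fun e =>
    ⟨fun i => ↑(OE (e i)), fun a b hab =>
      e.injective (OE.injective (Subtype.ext hab))⟩ with hbwd
  have hallmem : ∀ c : Fin φ.arity ↪ Fin N, Finset.map c Finset.univ = T → ∀ j, c j ∈ T := by
    intro c hc j
    rw [← hc]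
    exact Finset.mem_map_of_mem c (Finset.mem_univ j)
  have key : ∀ (c : Fin φ.arity ↪ Fin N) (h : ∀ j, c j ∈ T),
      restrict (fun i => ((OE.symm ⟨c i, h i⟩ : Fin φ.arity))) (downset ω T hT)
        = restrict (fun i => c i) ω := by
    intro c h
    funext r t
    show ω r _ = ω r _
    congr 1
    funext i
    simp only [Function.comp, downset, restrict, hOE]
    simp
  refine Finset.card_nbij' fwd bwd ?_ ?_ ?_ ?_
  · intro c hc
    rw [Finset.mem_coe, Finset.mem_filter, Finset.mem_filter] at hc
    have hall := hallmem c hc.2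
    rw [Finset.mem_coe, Finset.mem_filter]
    refine ⟨Finset.mem_univ _, ?_⟩
    rw [hfwd]
    simp only [dif_pos hall]
    show φ.sat (restrict (fun i => ((OE.symm ⟨c i, hall i⟩ : Fin φ.arity))) (downset ω T hT)) = true
    rw [key c hall]
    exact hc.1.2
  · intro e he
    rw [Finset.mem_coe, Finset.mem_filter] at he
    rw [Finset.mem_coe, Finset.mem_filter, Finset.mem_filter]
    have hebij : Function.Bijective e := (Finite.injective_iff_bijective).mp e.injective
    refine ⟨⟨Finset.mem_univ _, ?_⟩, ?_⟩
    · show φ.sat (restrict (fun i => ((OE (e i) : Fin N))) ω) = true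
      have : restrict (fun i => ((OE (e i) : Fin N))) ω
          = restrict (fun i => e i) (downset ω T hT) := by
        funext r t
        rfl
      rw [this]
      exact he.2
    · ext x
      simp only [hbwd, Finset.mem_map, Finset.mem_univ, true_and, Function.Embedding.coeFn_mk]
      constructor
      · rintro ⟨i, rfl⟩
        exact (OE (e i)).2
      · intro hx
        obtain ⟨i, hi⟩ := hebij.surjective (OE.symm ⟨x, hx⟩)
        exact ⟨i, by show ((OE (e i)) : Fin N) = x; rw [hi]; simp⟩
  · intro c hc
    rw [Finset.mem_coe, Finset.mem_filter, Finset.mem_filter] at hc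
    have hall := hallmem c hc.2
    rw [hfwd]
    ext j
    simp [dif_pos hall, hbwd]
    exact congrArg Fin.val (congrArg Subtype.val (OE.apply_symm_apply ⟨c j, hall j⟩))
  · intro e he
    have hall : ∀ j, (bwd e) j ∈ T := fun j => (OE (e j)).2
    rw [hfwd]
    ext j
    simp [dif_pos hall, hbwd]
    exact congrArg Fin.val (OE.symm_apply_apply (e j))

lemma nGround_split_s16 (φ : Formula V) {N : ℕ} (ω : Interp V (Fin N)) :
    (nGround φ ω : ℝ) = ∑ T ∈ Finset.powersetCard φ.arity (Finset.univ : Finset (Fin N)),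
      (if h : T.card = φ.arity then (nGround φ (downset ω T h) : ℝ) else 0) := by
  classical
  have h1 : nGround φ ω = (Finset.univ.filter (fun c : Fin φ.arity ↪ Fin N =>
      φ.sat (restrict (fun i => c i) ω) = true)).card := by
    rw [nGround, Fintype.card_subtype]
  have h2 : ∀ c : Fin φ.arity ↪ Fin N, c ∈ Finset.univ.filter (fun c : Fin φ.arity ↪ Fin N =>
      φ.sat (restrict (fun i => c i) ω) = true) →
      Finset.map c Finset.univ ∈ Finset.powersetCard φ.arity (Finset.univ : Finset (Fin N)) := by
    intro c _
    rw [Finset.mem_powersetCard]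
    exact ⟨Finset.subset_univ _, by simp⟩
  rw [h1, Finset.card_eq_sum_card_fiberwise h2]
  push_cast
  refine Finset.sum_congr rfl ?_
  intro T hT
  rw [Finset.mem_powersetCard] at hT
  rw [dif_pos hT.2, ← fiber_card_s16 φ ω T hT.2]

end Aux2
section Aux3
variable {V : Vocab}

lemma list_sum_partition {α : Type*} (s : Finset ℕ) (l : List α) (g : α → ℕ) (f : α → ℝ)
    (h : ∀ a ∈ l, g a ∈ s) :
    (l.map f).sum = ∑ k ∈ s, ((l.filter (fun a => g a == k)).map f).sum := by
  classical
  induction l with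
  | nil => simp
  | cons a l ih =>
    have ha := h a List.mem_cons_self
    have hl : ∀ b ∈ l, g b ∈ s := fun b hb => h b (List.mem_cons_of_mem a hb)
    simp only [List.map_cons, List.sum_cons, List.filter_cons]
    rw [ih hl]
    have : ∀ k ∈ s, (((if (g a == k) = true then a :: l.filter (fun b => g b == k)
        else l.filter (fun b => g b == k)).map f).sum)
        = (if g a = k then f a else 0) + ((l.filter (fun b => g b == k)).map f).sum := by
      intro k _
      by_cases hk : g a = k
      · simp [hk]
      · simp [hk]
    rw [Finset.sum_congr rfl this, Finset.sum_add_distrib, Finset.sum_ite_eq s (g a) (fun _ => f a)]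
    simp [ha]

lemma list_sum_swap {α : Type*} {β : Type*} (l : List α) (s : Finset β) (f : α → β → ℝ) :
    (l.map (fun a => ∑ T ∈ s, f a T)).sum = ∑ T ∈ s, (l.map (fun a => f a T)).sum := by
  induction l with
  | nil => simp
  | cons a l ih => simp [ih, Finset.sum_add_distrib]

noncomputable def locLog (Φ : MLN V) (k : ℕ) {N : ℕ} (ω : Interp V (Fin N))
    (T : Finset (Fin N)) : ℝ :=
  if h : T.card = k then Real.log (kweight Φ k (downset ω T h)) else 0

lemma nGround_split' (φ : Formula V) {N k : ℕ} (hk : φ.arity = k) (ω : Interp V (Fin N)) :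
    (nGround φ ω : ℝ) = ∑ T ∈ Finset.powersetCard k (Finset.univ : Finset (Fin N)),
      (if h : T.card = k then (nGround φ (downset ω T h) : ℝ) else 0) := by
  subst hk
  exact nGround_split_s16 φ ω

lemma filtered_sum_eq (Φ : MLN V) (k : ℕ) {N : ℕ} (ω : Interp V (Fin N)) :
    ((Φ.formulas.filter (fun p => p.1.arity == k)).map
        (fun p => p.2 * (nGround p.1 ω : ℝ))).sum
      = ∑ T ∈ Finset.powersetCard k (Finset.univ : Finset (Fin N)), locLog Φ k ω T := by
  classical
  have h1 : ∀ T ∈ Finset.powersetCard k (Finset.univ : Finset (Fin N)),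
      locLog Φ k ω T = ((Φ.formulas.filter (fun p => p.1.arity == k)).map
        (fun p => if h : T.card = k then p.2 * (nGround p.1 (downset ω T h) : ℝ) else 0)).sum := by
    intro T hT
    rw [Finset.mem_powersetCard] at hT
    rw [locLog, dif_pos hT.2, kweight, Real.log_exp]
    congr 1
    refine List.map_congr_left ?_
    intro p _
    rw [dif_pos hT.2]
  rw [Finset.sum_congr rfl h1, ← list_sum_swap]
  refine congrArg List.sum (List.map_congr_left ?_)
  intro p hp
  rw [List.mem_filter] at hp
  have hk : p.1.arity = k := by simpa using hp.2
  have : ∀ T ∈ Finset.powersetCard k (Finset.univ : Finset (Fin N)),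
      (if h : T.card = k then p.2 * (nGround p.1 (downset ω T h) : ℝ) else 0)
      = p.2 * (if h : T.card = k then (nGround p.1 (downset ω T h) : ℝ) else 0) := by
    intro T _
    by_cases h : T.card = k <;> simp [h]
  rw [Finset.sum_congr rfl this, ← Finset.mul_sum, ← nGround_split' p.1 hk ω]

lemma log_weight_eq (Φ : MLN V) (d : ℕ)
    (hd : ∀ p ∈ Φ.formulas, 1 ≤ p.1.arity ∧ p.1.arity ≤ d)
    {N : ℕ} (ω : Interp V (Fin N)) :
    Real.log (weight Φ ω) = ∑ k ∈ Finset.Icc 1 d,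
      ∑ T ∈ Finset.powersetCard k (Finset.univ : Finset (Fin N)), locLog Φ k ω T := by
  rw [weight, Real.log_exp]
  rw [list_sum_partition (Finset.Icc 1 d) Φ.formulas (fun p => p.1.arity)
    (fun p => p.2 * (nGround p.1 ω : ℝ))
    (fun p hp => Finset.mem_Icc.mpr (hd p hp))]
  exact Finset.sum_congr rfl fun k _ => filtered_sum_eq Φ k ω

end Aux3
section Aux4
variable {V : Vocab}

lemma downset_map {M N k : ℕ} (e : Fin M ↪ Fin N) (he : StrictMono e)
    (ω : Interp V (Fin N)) (T : Finset (Fin M)) (h : (T.map e).card = k) (h' : T.card = k) :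
    downset ω (T.map e) h = downset (restrict (fun i => e i) ω) T h' := by
  have key : (fun i => (((T.map e).orderIsoOfFin h i : Fin N)))
      = fun i => e ((T.orderIsoOfFin h' i : Fin M)) := by
    funext i
    rw [Finset.coe_orderIsoOfFin_apply, Finset.coe_orderIsoOfFin_apply]
    have := Finset.orderEmbOfFin_unique (f := fun i => e ((T.orderEmbOfFin h' i : Fin M)))
      h (fun x => Finset.mem_map_of_mem e (Finset.orderEmbOfFin_mem T h' x))
      (he.comp (T.orderEmbOfFin h').strictMono)
    exact (congrFun this i).symm
  show restrict _ ω = restrict _ (restrict _ ω)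
  rw [restrict_restrict]
  exact congrArg (fun f => restrict f ω) key

lemma filter_subset_map_eq {M N k : ℕ} (e : Fin M ↪ Fin N) :
    (Finset.powersetCard k (Finset.univ : Finset (Fin N))).filter
        (fun T => T ⊆ Finset.map e Finset.univ)
      = Finset.image (fun T' => Finset.map e T')
        (Finset.powersetCard k (Finset.univ : Finset (Fin M))) := by
  ext T
  simp only [Finset.mem_filter, Finset.mem_powersetCard, Finset.mem_image]
  constructor
  · rintro ⟨⟨-, hcard⟩, hsub⟩
    obtain ⟨u, -, rfl⟩ := Finset.subset_map_iff.mp hsub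
    exact ⟨u, ⟨Finset.subset_univ _, by simpa using hcard⟩, rfl⟩
  · rintro ⟨u, ⟨-, hcard⟩, rfl⟩
    refine ⟨⟨Finset.subset_univ _, by simpa using hcard⟩, ?_⟩
    exact Finset.map_subset_map.mpr (Finset.subset_univ _)

lemma sum_part (Φ : MLN V) {M N k : ℕ} (e : Fin M ↪ Fin N) (he : StrictMono e)
    (ω : Interp V (Fin N)) :
    ∑ T ∈ (Finset.powersetCard k (Finset.univ : Finset (Fin N))).filter
        (fun T => T ⊆ Finset.map e Finset.univ), locLog Φ k ω T
      = ∑ T ∈ Finset.powersetCard k (Finset.univ : Finset (Fin M)),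
          locLog Φ k (restrict (fun i => e i) ω) T := by
  rw [filter_subset_map_eq e]
  rw [Finset.sum_image (fun x _ y _ hxy => Finset.map_injective e hxy)]
  refine Finset.sum_congr rfl ?_
  intro T' _
  by_cases h : T'.card = k
  · have h2 : (T'.map e).card = k := by simpa using h
    rw [locLog, locLog, dif_pos h, dif_pos h2, downset_map e he ω T' h2 h]
  · have h2 : ¬ (T'.map e).card = k := by simpa using h
    rw [locLog, locLog, dif_neg h, dif_neg h2]

lemma sum_split_three {α β : Type*} [AddCommMonoid β] (s : Finset α) (p q : α → Prop)
    [DecidablePred p] [DecidablePred q] (hpq : ∀ a ∈ s, q a → ¬ p a) (f : α → β) :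
    ∑ a ∈ s, f a = ∑ a ∈ s.filter p, f a + ∑ a ∈ s.filter q, f a
      + ∑ a ∈ s.filter (fun a => ¬ p a ∧ ¬ q a), f a := by
  classical
  have e1 : (s.filter (fun a => ¬ p a)).filter q = s.filter q := by
    rw [Finset.filter_filter]
    apply Finset.filter_congr
    intro a ha
    simp only [and_iff_right_iff_imp]
    exact fun hq => hpq a ha hq
  have e2 : (s.filter (fun a => ¬ p a)).filter (fun a => ¬ q a)
      = s.filter (fun a => ¬ p a ∧ ¬ q a) := by
    rw [Finset.filter_filter]
  rw [← Finset.sum_filter_add_sum_filter_not s p f,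
    ← Finset.sum_filter_add_sum_filter_not (s.filter (fun a => ¬ p a)) q f, e1, e2, add_assoc]

lemma mem_castAdd_iff {n m : ℕ} (i : Fin (n + m)) :
    i ∈ Finset.map (Fin.castAddEmb m) (Finset.univ : Finset (Fin n)) ↔ (i : ℕ) < n := by
  simp only [Finset.mem_map, Finset.mem_univ, true_and]
  constructor
  · rintro ⟨x, rfl⟩
    simpa using x.2
  · intro h
    exact ⟨⟨i, h⟩, by ext; simp [Fin.castAddEmb_apply]⟩

lemma mem_natAdd_iff {n m : ℕ} (i : Fin (n + m)) :
    i ∈ Finset.map (Fin.natAddEmb n) (Finset.univ : Finset (Fin m)) ↔ n ≤ (i : ℕ) := by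
  simp only [Finset.mem_map, Finset.mem_univ, true_and]
  constructor
  · rintro ⟨x, rfl⟩
    simp [Fin.natAddEmb_apply]
  · intro h
    refine ⟨⟨(i : ℕ) - n, by omega⟩, ?_⟩
    ext
    simp [Fin.natAddEmb_apply]
    omega

lemma coe_castAddEmb {n m : ℕ} (x : Fin n) : ((Fin.castAddEmb m x : Fin (n + m)) : ℕ) = x := by
  simp [Fin.castAddEmb_apply]

lemma coe_natAddEmb {n m : ℕ} (x : Fin m) : ((Fin.natAddEmb n x : Fin (n + m)) : ℕ) = n + x := by
  simp [Fin.natAddEmb_apply]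

lemma castAdd_strictMono (n m : ℕ) : StrictMono (Fin.castAddEmb m (n := n)) := by
  intro a b h
  rw [Fin.lt_def, coe_castAddEmb, coe_castAddEmb]
  exact h

lemma natAdd_strictMono (n m : ℕ) : StrictMono (Fin.natAddEmb n (m := m)) := by
  intro a b h
  rw [Fin.lt_def, coe_natAddEmb, coe_natAddEmb]
  exact Nat.add_lt_add_left h n

end Aux4
section Aux5
variable {V : Vocab}

lemma disj_qAqB {n m k : ℕ} (hk : 1 ≤ k)
    (T : Finset (Fin (n + m))) (hT : T ∈ Finset.powersetCard k (Finset.univ : Finset (Fin (n + m)))) 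
    (hB : T ⊆ Finset.map (Fin.natAddEmb n) Finset.univ) :
    ¬ T ⊆ Finset.map (Fin.castAddEmb m) Finset.univ := by
  rw [Finset.mem_powersetCard] at hT
  have hne : T.Nonempty := Finset.card_pos.mp (by omega)
  obtain ⟨i, hi⟩ := hne
  intro hA
  have h1 := (mem_castAdd_iff i).mp (hA hi)
  have h2 := (mem_natAdd_iff i).mp (hB hi)
  omega

lemma cross_card (n m k : ℕ) (hk : 1 ≤ k) :
    ((Finset.powersetCard k (Finset.univ : Finset (Fin (n + m)))).filter
      (fun T => ¬ T ⊆ Finset.map (Fin.castAddEmb m) Finset.univ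
        ∧ ¬ T ⊆ Finset.map (Fin.natAddEmb n) Finset.univ)).card = exponent n m k := by
  classical
  set s := Finset.powersetCard k (Finset.univ : Finset (Fin (n + m))) with hs
  have hsplit := sum_split_three s
    (fun T => T ⊆ Finset.map (Fin.castAddEmb m) Finset.univ)
    (fun T => T ⊆ Finset.map (Fin.natAddEmb n) Finset.univ)
    (fun T hT hB => disj_qAqB hk T hT hB) (fun _ => (1 : ℕ))
  simp only [Finset.sum_const, smul_eq_mul, mul_one] at hsplit
  have hA : (s.filter (fun T => T ⊆ Finset.map (Fin.castAddEmb m) Finset.univ)).card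
      = n.choose k := by
    rw [hs, filter_subset_map_eq (Fin.castAddEmb m),
      Finset.card_image_of_injective _ (Finset.map_injective _),
      Finset.card_powersetCard, Finset.card_univ, Fintype.card_fin]
  have hB : (s.filter (fun T => T ⊆ Finset.map (Fin.natAddEmb n) Finset.univ)).card
      = m.choose k := by
    rw [hs, filter_subset_map_eq (Fin.natAddEmb n),
      Finset.card_image_of_injective _ (Finset.map_injective _),
      Finset.card_powersetCard, Finset.card_univ, Fintype.card_fin]
  have hT : s.card = (n + m).choose k := by
    rw [hs, Finset.card_powersetCard, Finset.card_univ, Fintype.card_fin]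
  rw [hA, hB, hT] at hsplit
  rw [exponent]
  omega

lemma locLog_bounds (Φ : MLN V) {N k : ℕ} (ω : Interp V (Fin N)) (T : Finset (Fin N))
    (hT : T.card = k) :
    Real.log (wmin Φ k) ≤ locLog Φ k ω T ∧ locLog Φ k ω T ≤ Real.log (wmax Φ k) := by
  rw [locLog, dif_pos hT]
  constructor
  · exact Real.log_le_log (wmin_pos Φ k) (wmin_le_kweight Φ k _)
  · exact Real.log_le_log (kweight_pos Φ k _) (kweight_le_wmax Φ k _)

lemma log_Mmin (Φ : MLN V) (d n m : ℕ) :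
    Real.log (Mmin Φ d n m)
      = ∑ k ∈ Finset.Icc 1 d, (exponent n m k : ℝ) * Real.log (wmin Φ k) := by
  rw [Mmin, Real.log_prod (fun k _ => pow_ne_zero _ (ne_of_gt (wmin_pos Φ k)))]
  exact Finset.sum_congr rfl fun k _ => Real.log_pow _ _

lemma log_Mmax (Φ : MLN V) (d n m : ℕ) :
    Real.log (Mmax Φ d n m)
      = ∑ k ∈ Finset.Icc 1 d, (exponent n m k : ℝ) * Real.log (wmax Φ k) := by
  rw [Mmax, Real.log_prod (fun k _ => pow_ne_zero _ (ne_of_gt (wmax_pos Φ k)))]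
  exact Finset.sum_congr rfl fun k _ => Real.log_pow _ _

lemma weight_bounds (Φ : MLN V) (d n m : ℕ)
    (hd : ∀ p ∈ Φ.formulas, 1 ≤ p.1.arity ∧ p.1.arity ≤ d)
    (ω : Interp V (Fin (n + m))) :
    weight Φ (restrict (Fin.castAdd m) ω) * weight Φ (restrict (Fin.natAdd n) ω)
        * Mmin Φ d n m ≤ weight Φ ω ∧
      weight Φ ω ≤ weight Φ (restrict (Fin.castAdd m) ω) * weight Φ (restrict (Fin.natAdd n) ω)
        * Mmax Φ d n m := by
  classical
  have hcast : (fun i => (Fin.castAddEmb m i : Fin (n + m))) = Fin.castAdd m := by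
    funext x
    ext
    rw [coe_castAddEmb, Fin.coe_castAdd]
  have hnat : (fun i => (Fin.natAddEmb n i : Fin (n + m))) = Fin.natAdd n := by
    funext x
    ext
    rw [coe_natAddEmb, Fin.coe_natAdd]
  set w1 := weight Φ (restrict (Fin.castAdd m) ω) with hw1
  set w2 := weight Φ (restrict (Fin.natAdd n) ω) with hw2
  have key : ∀ k ∈ Finset.Icc 1 d,
      ∑ T ∈ Finset.powersetCard k (Finset.univ : Finset (Fin (n + m))), locLog Φ k ω T
        = (∑ T ∈ Finset.powersetCard k (Finset.univ : Finset (Fin n)),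
            locLog Φ k (restrict (Fin.castAdd m) ω) T)
          + (∑ T ∈ Finset.powersetCard k (Finset.univ : Finset (Fin m)),
            locLog Φ k (restrict (Fin.natAdd n) ω) T)
          + ∑ T ∈ (Finset.powersetCard k (Finset.univ : Finset (Fin (n + m)))).filter
              (fun T => ¬ T ⊆ Finset.map (Fin.castAddEmb m) Finset.univ
                ∧ ¬ T ⊆ Finset.map (Fin.natAddEmb n) Finset.univ), locLog Φ k ω T := by
    intro k hk
    rw [Finset.mem_Icc] at hk
    rw [sum_split_three (Finset.powersetCard k (Finset.univ : Finset (Fin (n + m))))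
      (fun T => T ⊆ Finset.map (Fin.castAddEmb m) Finset.univ)
      (fun T => T ⊆ Finset.map (Fin.natAddEmb n) Finset.univ)
      (fun T hT hB => disj_qAqB hk.1 T hT hB) (locLog Φ k ω)]
    rw [sum_part Φ (Fin.castAddEmb m) (castAdd_strictMono n m) ω,
      sum_part Φ (Fin.natAddEmb n) (natAdd_strictMono n m) ω, hcast, hnat]
  have hL : Real.log (weight Φ ω) = Real.log w1 + Real.log w2
      + ∑ k ∈ Finset.Icc 1 d,
          ∑ T ∈ (Finset.powersetCard k (Finset.univ : Finset (Fin (n + m)))).filter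
            (fun T => ¬ T ⊆ Finset.map (Fin.castAddEmb m) Finset.univ
              ∧ ¬ T ⊆ Finset.map (Fin.natAddEmb n) Finset.univ), locLog Φ k ω T := by
    rw [log_weight_eq Φ d hd ω, Finset.sum_congr rfl key, Finset.sum_add_distrib,
      Finset.sum_add_distrib, hw1, hw2, log_weight_eq Φ d hd, log_weight_eq Φ d hd]
  have crossLB : ∀ k ∈ Finset.Icc 1 d,
      (exponent n m k : ℝ) * Real.log (wmin Φ k)
        ≤ ∑ T ∈ (Finset.powersetCard k (Finset.univ : Finset (Fin (n + m)))).filter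
            (fun T => ¬ T ⊆ Finset.map (Fin.castAddEmb m) Finset.univ
              ∧ ¬ T ⊆ Finset.map (Fin.natAddEmb n) Finset.univ), locLog Φ k ω T := by
    intro k hk
    rw [Finset.mem_Icc] at hk
    have := Finset.card_nsmul_le_sum
      ((Finset.powersetCard k (Finset.univ : Finset (Fin (n + m)))).filter
        (fun T => ¬ T ⊆ Finset.map (Fin.castAddEmb m) Finset.univ
          ∧ ¬ T ⊆ Finset.map (Fin.natAddEmb n) Finset.univ))
      (locLog Φ k ω) (Real.log (wmin Φ k)) ?_
    · rwa [cross_card n m k hk.1, nsmul_eq_mul] at this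
    · intro T hT
      have hT' := (Finset.mem_filter.mp hT).1
      rw [Finset.mem_powersetCard] at hT'
      exact (locLog_bounds Φ ω T hT'.2).1
  have crossUB : ∀ k ∈ Finset.Icc 1 d,
      (∑ T ∈ (Finset.powersetCard k (Finset.univ : Finset (Fin (n + m)))).filter
            (fun T => ¬ T ⊆ Finset.map (Fin.castAddEmb m) Finset.univ
              ∧ ¬ T ⊆ Finset.map (Fin.natAddEmb n) Finset.univ), locLog Φ k ω T)
        ≤ (exponent n m k : ℝ) * Real.log (wmax Φ k) := by
    intro k hk
    rw [Finset.mem_Icc] at hk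
    have := Finset.sum_le_card_nsmul
      ((Finset.powersetCard k (Finset.univ : Finset (Fin (n + m)))).filter
        (fun T => ¬ T ⊆ Finset.map (Fin.castAddEmb m) Finset.univ
          ∧ ¬ T ⊆ Finset.map (Fin.natAddEmb n) Finset.univ))
      (locLog Φ k ω) (Real.log (wmax Φ k)) ?_
    · rwa [cross_card n m k hk.1, nsmul_eq_mul] at this
    · intro T hT
      have hT' := (Finset.mem_filter.mp hT).1
      rw [Finset.mem_powersetCard] at hT'
      exact (locLog_bounds Φ ω T hT'.2).2
  have hlogLB : Real.log w1 + Real.log w2 + Real.log (Mmin Φ d n m)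
      ≤ Real.log (weight Φ ω) := by
    rw [hL, log_Mmin]
    have := Finset.sum_le_sum crossLB
    linarith
  have hlogUB : Real.log (weight Φ ω)
      ≤ Real.log w1 + Real.log w2 + Real.log (Mmax Φ d n m) := by
    rw [hL, log_Mmax]
    have := Finset.sum_le_sum crossUB
    linarith
  constructor
  · calc w1 * w2 * Mmin Φ d n m
        = Real.exp (Real.log w1 + Real.log w2 + Real.log (Mmin Φ d n m)) := by
          rw [Real.exp_add, Real.exp_add, Real.exp_log (weight_pos Φ _),
            Real.exp_log (weight_pos Φ _), Real.exp_log (Mmin_pos Φ d n m)]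
      _ ≤ Real.exp (Real.log (weight Φ ω)) := Real.exp_le_exp.mpr hlogLB
      _ = weight Φ ω := Real.exp_log (weight_pos Φ ω)
  · calc weight Φ ω = Real.exp (Real.log (weight Φ ω)) :=
          (Real.exp_log (weight_pos Φ ω)).symm
      _ ≤ Real.exp (Real.log w1 + Real.log w2 + Real.log (Mmax Φ d n m)) :=
          Real.exp_le_exp.mpr hlogUB
      _ = w1 * w2 * Mmax Φ d n m := by
          rw [Real.exp_add, Real.exp_add, Real.exp_log (weight_pos Φ _),
            Real.exp_log (weight_pos Φ _), Real.exp_log (Mmax_pos Φ d n m)]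

end Aux5
section Aux6
variable {V : Vocab}

lemma fiber_filter_card {n m : ℕ} (C : ℕ)
    (hC : ∀ (ω₁ : Interp V (Fin n)) (ω₂ : Interp V (Fin m)),
      Fintype.card {ω : Interp V (Fin (n + m)) //
        restrict (Fin.castAdd m) ω = ω₁ ∧ restrict (Fin.natAdd n) ω = ω₂} = C)
    (ω₁ : Interp V (Fin n)) (ω₂ : Interp V (Fin m)) :
    (Finset.univ.filter (fun ω' : Interp V (Fin (n + m)) =>
      restrict (Fin.castAdd m) ω' = ω₁ ∧ restrict (Fin.natAdd n) ω' = ω₂)).card = C := by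
  rw [← Fintype.card_subtype]
  exact hC ω₁ ω₂

lemma C_pos {n m : ℕ} (C : ℕ)
    (hC : ∀ (ω₁ : Interp V (Fin n)) (ω₂ : Interp V (Fin m)),
      Fintype.card {ω : Interp V (Fin (n + m)) //
        restrict (Fin.castAdd m) ω = ω₁ ∧ restrict (Fin.natAdd n) ω = ω₂} = C) :
    0 < C := by
  have h := hC (restrict (Fin.castAdd m) (fun _ _ => true))
    (restrict (Fin.natAdd n) (fun _ _ => true))
  rw [← h]
  exact Fintype.card_pos_iff.mpr ⟨⟨(fun _ _ => true), rfl, rfl⟩⟩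

lemma fiber_sum_bounds (Φ : MLN V) (d n m : ℕ)
    (hd : ∀ p ∈ Φ.formulas, 1 ≤ p.1.arity ∧ p.1.arity ≤ d) (C : ℕ)
    (hC : ∀ (ω₁ : Interp V (Fin n)) (ω₂ : Interp V (Fin m)),
      Fintype.card {ω : Interp V (Fin (n + m)) //
        restrict (Fin.castAdd m) ω = ω₁ ∧ restrict (Fin.natAdd n) ω = ω₂} = C)
    (ω₁ : Interp V (Fin n)) (ω₂ : Interp V (Fin m)) :
    (C : ℝ) * (weight Φ ω₁ * weight Φ ω₂ * Mmin Φ d n m)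
        ≤ ∑ ω' ∈ Finset.univ.filter (fun ω' : Interp V (Fin (n + m)) =>
            restrict (Fin.castAdd m) ω' = ω₁ ∧ restrict (Fin.natAdd n) ω' = ω₂), weight Φ ω' ∧
      (∑ ω' ∈ Finset.univ.filter (fun ω' : Interp V (Fin (n + m)) =>
            restrict (Fin.castAdd m) ω' = ω₁ ∧ restrict (Fin.natAdd n) ω' = ω₂), weight Φ ω')
        ≤ (C : ℝ) * (weight Φ ω₁ * weight Φ ω₂ * Mmax Φ d n m) := by
  classical
  constructor
  · have := Finset.card_nsmul_le_sum
      (Finset.univ.filter (fun ω' : Interp V (Fin (n + m)) =>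
        restrict (Fin.castAdd m) ω' = ω₁ ∧ restrict (Fin.natAdd n) ω' = ω₂))
      (weight Φ) (weight Φ ω₁ * weight Φ ω₂ * Mmin Φ d n m) ?_
    · rwa [fiber_filter_card C hC, nsmul_eq_mul] at this
    · intro ω' hω'
      rw [Finset.mem_filter] at hω'
      have h := (weight_bounds Φ d n m hd ω').1
      rwa [hω'.2.1, hω'.2.2] at h
  · have := Finset.sum_le_card_nsmul
      (Finset.univ.filter (fun ω' : Interp V (Fin (n + m)) =>
        restrict (Fin.castAdd m) ω' = ω₁ ∧ restrict (Fin.natAdd n) ω' = ω₂))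
      (weight Φ) (weight Φ ω₁ * weight Φ ω₂ * Mmax Φ d n m) ?_
    · rwa [fiber_filter_card C hC, nsmul_eq_mul] at this
    · intro ω' hω'
      rw [Finset.mem_filter] at hω'
      have h := (weight_bounds Φ d n m hd ω').2
      rwa [hω'.2.1, hω'.2.2] at h

lemma Z_bounds (Φ : MLN V) (d n m : ℕ)
    (hd : ∀ p ∈ Φ.formulas, 1 ≤ p.1.arity ∧ p.1.arity ≤ d) (C : ℕ)
    (hC : ∀ (ω₁ : Interp V (Fin n)) (ω₂ : Interp V (Fin m)),
      Fintype.card {ω : Interp V (Fin (n + m)) //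
        restrict (Fin.castAdd m) ω = ω₁ ∧ restrict (Fin.natAdd n) ω = ω₂} = C) :
    (C : ℝ) * (Zpart Φ n * Zpart Φ m) * Mmin Φ d n m ≤ Zpart Φ (n + m) ∧
      Zpart Φ (n + m) ≤ (C : ℝ) * (Zpart Φ n * Zpart Φ m) * Mmax Φ d n m := by
  classical
  have hfib : Zpart Φ (n + m) = ∑ p : Interp V (Fin n) × Interp V (Fin m),
      ∑ ω' ∈ Finset.univ.filter (fun ω' : Interp V (Fin (n + m)) =>
        restrict (Fin.castAdd m) ω' = p.1 ∧ restrict (Fin.natAdd n) ω' = p.2), weight Φ ω' := by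
    rw [Zpart]
    rw [← Finset.sum_fiberwise Finset.univ
      (fun ω' : Interp V (Fin (n + m)) =>
        (restrict (Fin.castAdd m) ω', restrict (Fin.natAdd n) ω')) (weight Φ)]
    refine Finset.sum_congr rfl fun p _ => Finset.sum_congr ?_ fun _ _ => rfl
    apply Finset.filter_congr
    intro ω' _
    rw [Prod.ext_iff]
  have hmin : ∀ K : ℝ, ∑ p : Interp V (Fin n) × Interp V (Fin m),
      (C : ℝ) * (weight Φ p.1 * weight Φ p.2 * K)
        = (C : ℝ) * (Zpart Φ n * Zpart Φ m) * K := by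
    intro K
    rw [Fintype.sum_prod_type, Zpart, Zpart, eq_comm]
    simp only [Finset.mul_sum, Finset.sum_mul]
    rw [Finset.sum_comm]
    exact Finset.sum_congr rfl fun a _ => Finset.sum_congr rfl fun b _ => by ring
  constructor
  · rw [hfib, ← hmin (Mmin Φ d n m)]
    exact Finset.sum_le_sum fun p _ => (fiber_sum_bounds Φ d n m hd C hC p.1 p.2).1
  · rw [hfib, ← hmin (Mmax Φ d n m)]
    exact Finset.sum_le_sum fun p _ => (fiber_sum_bounds Φ d n m hd C hC p.1 p.2).2

lemma S_bounds (Φ : MLN V) (d n m : ℕ)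
    (hd : ∀ p ∈ Φ.formulas, 1 ≤ p.1.arity ∧ p.1.arity ≤ d) (C : ℕ)
    (hC : ∀ (ω₁ : Interp V (Fin n)) (ω₂ : Interp V (Fin m)),
      Fintype.card {ω : Interp V (Fin (n + m)) //
        restrict (Fin.castAdd m) ω = ω₁ ∧ restrict (Fin.natAdd n) ω = ω₂} = C)
    (ω : Interp V (Fin n)) :
    (C : ℝ) * (weight Φ ω * Zpart Φ m) * Mmin Φ d n m
        ≤ (∑ ω' ∈ Finset.univ.filter (fun ω' : Interp V (Fin (n + m)) =>
            restrict (Fin.castAdd m) ω' = ω), weight Φ ω') ∧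
      (∑ ω' ∈ Finset.univ.filter (fun ω' : Interp V (Fin (n + m)) =>
          restrict (Fin.castAdd m) ω' = ω), weight Φ ω')
        ≤ (C : ℝ) * (weight Φ ω * Zpart Φ m) * Mmax Φ d n m := by
  classical
  have hfib : (∑ ω' ∈ Finset.univ.filter (fun ω' : Interp V (Fin (n + m)) =>
      restrict (Fin.castAdd m) ω' = ω), weight Φ ω')
      = ∑ ω₂ : Interp V (Fin m),
        ∑ ω' ∈ Finset.univ.filter (fun ω' : Interp V (Fin (n + m)) =>
          restrict (Fin.castAdd m) ω' = ω ∧ restrict (Fin.natAdd n) ω' = ω₂), weight Φ ω' := by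
    rw [← Finset.sum_fiberwise
      (Finset.univ.filter (fun ω' : Interp V (Fin (n + m)) => restrict (Fin.castAdd m) ω' = ω))
      (fun ω' => restrict (Fin.natAdd n) ω') (weight Φ)]
    refine Finset.sum_congr rfl fun ω₂ _ => Finset.sum_congr ?_ fun _ _ => rfl
    rw [Finset.filter_filter]
  have hmin : ∀ K : ℝ, ∑ ω₂ : Interp V (Fin m),
      (C : ℝ) * (weight Φ ω * weight Φ ω₂ * K)
        = (C : ℝ) * (weight Φ ω * Zpart Φ m) * K := by
    intro K
    rw [Zpart, eq_comm]
    simp only [Finset.mul_sum, Finset.sum_mul]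
    exact Finset.sum_congr rfl fun b _ => by ring
  constructor
  · rw [hfib, ← hmin (Mmin Φ d n m)]
    exact Finset.sum_le_sum fun ω₂ _ => (fiber_sum_bounds Φ d n m hd C hC ω ω₂).1
  · rw [hfib, ← hmin (Mmax Φ d n m)]
    exact Finset.sum_le_sum fun ω₂ _ => (fiber_sum_bounds Φ d n m hd C hC ω ω₂).2

end Aux6

/-- exact log-likelihood decomposition. For any `ω ∈ Ω^(n)`,
`−log P_Φ^(n+m)↓[n](ω) = −log P_Φ^(n)(ω) + log(Z(n+m)/(Z(n)·Z(m)·C)) −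
 log((1/(C·Z(m))) ∑_{ω'↓[n]=ω} w(ω')/w(ω))`, where the middle term lies in
`[log M_min, log M_max]` and the last log's argument lies in `[M_min, M_max]`. -/
theorem log_likelihood_decomposition {V : Vocab} (Φ : MLN V) (d n m : ℕ)
    (hd : ∀ p ∈ Φ.formulas, 1 ≤ p.1.arity ∧ p.1.arity ≤ d)
    (C : ℕ)
    (hC : ∀ (ω₁ : Interp V (Fin n)) (ω₂ : Interp V (Fin m)),
      Fintype.card {ω : Interp V (Fin (n + m)) //
        restrict (Fin.castAdd m) ω = ω₁ ∧ restrict (Fin.natAdd n) ω = ω₂} = C)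
    (ω : Interp V (Fin n)) :
    -Real.log (marg Φ n m ω) =
      -Real.log (Pdist Φ n ω) +
        Real.log (Zpart Φ (n + m) / (Zpart Φ n * Zpart Φ m * (C : ℝ))) -
        Real.log ((1 / ((C : ℝ) * Zpart Φ m)) *
          ∑ ω' ∈ Finset.univ.filter
              (fun ω' : Interp V (Fin (n + m)) => restrict (Fin.castAdd m) ω' = ω),
            weight Φ ω' / weight Φ ω) ∧
    Real.log (Zpart Φ (n + m) / (Zpart Φ n * Zpart Φ m * (C : ℝ))) ∈
      Set.Icc (Real.log (Mmin Φ d n m)) (Real.log (Mmax Φ d n m)) ∧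
    ((1 / ((C : ℝ) * Zpart Φ m)) *
        ∑ ω' ∈ Finset.univ.filter
            (fun ω' : Interp V (Fin (n + m)) => restrict (Fin.castAdd m) ω' = ω),
          weight Φ ω' / weight Φ ω) ∈
      Set.Icc (Mmin Φ d n m) (Mmax Φ d n m) := by
  classical
  have hC0 : (0 : ℝ) < (C : ℝ) := by exact_mod_cast C_pos C hC
  have ha : 0 < Zpart Φ (n + m) := Zpart_pos Φ (n + m)
  have hb : 0 < Zpart Φ n := Zpart_pos Φ n
  have hc : 0 < Zpart Φ m := Zpart_pos Φ m
  have hw : 0 < weight Φ ω := weight_pos Φ ω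
  have hSb := S_bounds Φ d n m hd C hC ω
  set S := ∑ ω' ∈ Finset.univ.filter
      (fun ω' : Interp V (Fin (n + m)) => restrict (Fin.castAdd m) ω' = ω),
    weight Φ ω' with hSdef
  have hS : 0 < S :=
    lt_of_lt_of_le (mul_pos (mul_pos hC0 (mul_pos hw hc)) (Mmin_pos Φ d n m)) hSb.1
  have hmarg : marg Φ n m ω = S / Zpart Φ (n + m) := by
    rw [marg, hSdef, Finset.sum_div]
    rfl
  have hQ : (∑ ω' ∈ Finset.univ.filter
      (fun ω' : Interp V (Fin (n + m)) => restrict (Fin.castAdd m) ω' = ω),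
        weight Φ ω' / weight Φ ω) = S / weight Φ ω := by
    rw [hSdef, Finset.sum_div]
  have h3 : (1 / ((C : ℝ) * Zpart Φ m)) * (S / weight Φ ω)
      = S / ((C : ℝ) * Zpart Φ m * weight Φ ω) := by
    rw [div_mul_div_comm, one_mul]
  have hX : (0 : ℝ) < (C : ℝ) * Zpart Φ m * weight Φ ω :=
    mul_pos (mul_pos hC0 hc) hw
  have hY : (0 : ℝ) < Zpart Φ n * Zpart Φ m * (C : ℝ) :=
    mul_pos (mul_pos hb hc) hC0
  refine ⟨?_, ?_, ?_⟩
  · rw [hmarg, hQ, h3, Pdist]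
    rw [Real.log_div hS.ne' ha.ne', Real.log_div hw.ne' hb.ne',
      Real.log_div ha.ne' hY.ne', Real.log_div hS.ne' hX.ne',
      Real.log_mul (mul_pos hb hc).ne' hC0.ne', Real.log_mul hb.ne' hc.ne',
      Real.log_mul (mul_pos hC0 hc).ne' hw.ne', Real.log_mul hC0.ne' hc.ne']
    ring
  · constructor
    · apply Real.log_le_log (Mmin_pos Φ d n m)
      rw [le_div_iff₀ hY]
      calc Mmin Φ d n m * (Zpart Φ n * Zpart Φ m * (C : ℝ))
          = (C : ℝ) * (Zpart Φ n * Zpart Φ m) * Mmin Φ d n m := by ring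
        _ ≤ Zpart Φ (n + m) := (Z_bounds Φ d n m hd C hC).1
    · apply Real.log_le_log (div_pos ha hY)
      rw [div_le_iff₀ hY]
      calc Zpart Φ (n + m)
          ≤ (C : ℝ) * (Zpart Φ n * Zpart Φ m) * Mmax Φ d n m := (Z_bounds Φ d n m hd C hC).2
        _ = Mmax Φ d n m * (Zpart Φ n * Zpart Φ m * (C : ℝ)) := by ring
  · rw [hQ, h3]
    constructor
    · rw [le_div_iff₀ hX]
      calc Mmin Φ d n m * ((C : ℝ) * Zpart Φ m * weight Φ ω)
          = (C : ℝ) * (weight Φ ω * Zpart Φ m) * Mmin Φ d n m := by ring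
        _ ≤ S := hSb.1
    · rw [div_le_iff₀ hX]
      calc S ≤ (C : ℝ) * (weight Φ ω * Zpart Φ m) * Mmax Φ d n m := hSb.2
        _ = Mmax Φ d n m * ((C : ℝ) * Zpart Φ m * weight Φ ω) := by ring
end
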